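/- arXiv:2004.01158 — 4 statements merged into one kernel-verified Lean document; each statement's English description precedes it below -/
import Mathlib

section
/- Let p, q be selfadjoint projections in a unital C*-algebra with b = p + q. If b - 1 has trivial annihilator, then both (p - q) - 1 and (p - q) + 1 have trivial annihilator. -/
/-- If `p, q` are selfadjoint projections in a unital C*-algebra and
`b - 1 = p + q - 1` has trivial annihilator, then `(p - q) - 1` and `(p - q) + 1`
both have trivial annihilator. -/
theorem diff_pm_one_trivial_annihilator {A : Type*} [CStarAlgebra A]
    (p q : A) (hp : IsSelfAdjoint p) (hp2 : p * p = p)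
    (hq : IsSelfAdjoint q) (hq2 : q * q = q)
    (hb : ∀ x : A, (p + q - 1) * x = 0 → x = 0) :
    (∀ x : A, ((p - q) - 1) * x = 0 → x = 0) ∧
      (∀ x : A, ((p - q) + 1) * x = 0 → x = 0) := by
  have key : (p + q - 1) * (p + q - 1) = (1 + (p - q)) * (1 - (p - q)) := by
    have h1 : (p + q - 1) * (p + q - 1) = p*p + q*q + 1 + p*q + q*p - 2*p - 2*q := by
      noncomm_ring
    have h2 : (1 + (p - q)) * (1 - (p - q)) = 1 + p*q + q*p - p*p - q*q := by
      noncomm_ring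
    rw [h1, h2, hp2, hq2]
    noncomm_ring
  have key2 : (p + q - 1) * (p + q - 1) = (1 - (p - q)) * (1 + (p - q)) := by
    rw [key]; noncomm_ring
  constructor
  · intro x hx
    apply hb; apply hb
    rw [← mul_assoc, key]
    have h1 : (1 - (p - q)) * x = 0 := by
      have : (1 - (p - q)) * x = -(((p - q) - 1) * x) := by noncomm_ring
      rw [this, hx, neg_zero]
    rw [mul_assoc, h1, mul_zero]
  · intro x hx
    apply hb; apply hb
    rw [← mul_assoc, key2]
    have h1 : (1 + (p - q)) * x = 0 := by
      have : (1 + (p - q)) * x = ((p - q) + 1) * x := by noncomm_ring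
      rw [this, hx]
    rw [mul_assoc, h1, mul_zero]
end

section
/- Let x be a selfadjoint element of the Calkin algebra C(H). Then there exists a selfadjoint X ∈ B(H) with π(X) = x and ‖X‖ = ‖x‖, where ‖x‖ is the quotient norm. -/
/-- Every selfadjoint element `x` of the Calkin algebra admits a
selfadjoint lift `X ∈ B(H)` whose norm equals the quotient norm of `x`,
i.e. `‖X‖ = inf {‖Y‖ : π Y = x}`. -/
theorem calkin_selfAdjoint_norm_preserving_lift {H : Type*} [NormedAddCommGroup H]
    [InnerProductSpace ℂ H] [CompleteSpace H] [TopologicalSpace.SeparableSpace H]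
    (hinf : ¬ FiniteDimensional ℂ H)
    {C : Type*} [CStarAlgebra C]
    (π : (H →L[ℂ] H) →⋆ₐ[ℂ] C) (hsurj : Function.Surjective π)
    (hker : ∀ X : H →L[ℂ] H, π X = 0 ↔ IsCompactOperator ⇑X)
    (x : C) (hx : IsSelfAdjoint x) :
    ∃ X : H →L[ℂ] H, IsSelfAdjoint X ∧ π X = x ∧
      ‖X‖ = sInf {r : ℝ | ∃ Y : H →L[ℂ] H, π Y = x ∧ r = ‖Y‖} := by
  -- C is nontrivial: the identity is not compact since H is infinite-dimensional
  have hid : ¬ IsCompactOperator ⇑(1 : H →L[ℂ] H) := by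
    intro ⟨K, hK, hKmem⟩
    simp only [ContinuousLinearMap.one_def, ContinuousLinearMap.coe_id, Set.preimage_id] at hKmem
    obtain ⟨r, hrpos, hrsub⟩ := Metric.eventually_nhds_iff_ball.mp hKmem
    have hsub : Metric.closedBall (0 : H) (r/2) ⊆ K := fun y hy => by
      have h1 : dist y 0 ≤ r/2 := Metric.mem_closedBall.mp hy
      exact hrsub y (Metric.mem_ball.mpr (by linarith))
    exact hinf <| FiniteDimensional.of_isCompact_closedBall₀ ℂ (by linarith)
      (hK.of_isClosed_subset Metric.isClosed_closedBall hsub)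
  have hC : Nontrivial C := by
    refine nontrivial_of_ne (π 1) 0 fun h => hid ((hker 1).mp h)
  -- π is norm-nonincreasing
  have hcontr : ∀ Y : H →L[ℂ] H, ‖π Y‖ ≤ ‖Y‖ := fun Y =>
    NonUnitalStarAlgHom.norm_apply_le π Y
  have hπcont : Continuous π :=
    AddMonoidHomClass.continuous_of_bound π 1 (by simpa using hcontr)
  -- a selfadjoint lift of x
  obtain ⟨Y, hY⟩ := hsurj x
  set X0 : H →L[ℂ] H := (2 : ℂ)⁻¹ • (Y + star Y) with hX0def
  have hX0sa : IsSelfAdjoint X0 := by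
    rw [hX0def]
    rw [IsSelfAdjoint, star_smul, star_add, star_star, add_comm]
    simp
  have hπX0 : π X0 = x := by
    have : π X0 = (2 : ℂ)⁻¹ • (x + star x) := by
      simp [hX0def, map_smul, map_add, map_star, hY]
    rw [hx.star_eq] at this
    rw [this, ← two_smul ℂ x, smul_smul]
    norm_num
  set r : ℝ := ‖x‖ with hr
  have hr0 : (0:ℝ) ≤ r := norm_nonneg x
  -- truncation function
  set f : ℝ → ℝ := fun t => max (-r) (min r t) with hf
  have hfc : Continuous f := by fun_prop
  have hfbd : ∀ t : ℝ, |f t| ≤ r := by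
    intro t
    rw [abs_le]
    constructor
    · exact le_max_left _ _
    · exact max_le (neg_le_self hr0) (min_le_left _ _)
  have hfid : ∀ t ∈ spectrum ℝ x, f t = t := by
    intro t ht
    have hnorm : ‖t‖ ≤ ‖x‖ := spectrum.norm_le_norm_of_mem ht
    rw [Real.norm_eq_abs, abs_le] at hnorm
    simp only [hf]
    rw [min_eq_right hnorm.2, max_eq_right hnorm.1]
  set X : H →L[ℂ] H := cfc f X0 with hX
  have hXsa : IsSelfAdjoint X := cfc_predicate f X0
  have hπX : π X = x := by
    have hmap : π (cfc f X0) = cfc f (π X0) :=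
      StarAlgHom.map_cfc π f X0 (hfc.continuousOn) hπcont hX0sa (by rw [hπX0]; exact hx)
    rw [hX, hmap, hπX0]
    calc cfc f x = cfc (id : ℝ → ℝ) x := cfc_congr hfid
    _ = x := cfc_id ℝ x
  have hXle : ‖X‖ ≤ r := norm_cfc_le hr0 (fun t _ => by simpa using hfbd t)
  have hXge : r ≤ ‖X‖ := by rw [hr, ← hπX]; exact hcontr X
  have hXnorm : ‖X‖ = r := le_antisymm hXle hXge
  refine ⟨X, hXsa, hπX, ?_⟩
  have hbdd : BddBelow {s : ℝ | ∃ Y : H →L[ℂ] H, π Y = x ∧ s = ‖Y‖} := by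
    refine ⟨0, fun s hs => ?_⟩
    obtain ⟨Z, _, hZ⟩ := hs
    rw [hZ]; exact norm_nonneg _
  refine le_antisymm ?_ ?_
  · rw [hXnorm]
    refine le_csInf ⟨‖X‖, X, hπX, rfl⟩ ?_
    rintro s ⟨Z, hZ, rfl⟩
    rw [hr, ← hZ]
    exact hcontr Z
  · exact csInf_le hbdd ⟨X, hπX, rfl⟩
end

section
/- Let δ(t) = e^{tz} p e^{-tz} be a normalized geodesic in the projections of the Calkin algebra: p a projection, z* = -z, p z p = 0, (1-p) z (1-p) = 0, ‖z‖ ≤ π/2. Then there exist P, Z ∈ B(H) with P a projection lifting p, Z* = -Z, P Z P = 0, (1-P) Z (1-P) = 0, ‖Z‖ = ‖z‖, π(Z) = z, so that Δ(t) = e^{tZ} P e^{-tZ} satisfies π(Δ(t)) = δ(t) for all t. Moreover P can be chosen to be any projection lifting p. -/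
open NormedSpace

/-- Conjugation by a selfadjoint symmetry, as a star algebra homomorphism. -/
noncomputable def conjStarAlgHom {A : Type*} [Ring A] [StarRing A] [Algebra ℂ A]
    (S : A) (hS : S * S = 1) (hSs : star S = S) : A →⋆ₐ[ℂ] A where
  toFun X := S * X * S
  map_one' := by rw [mul_one, hS]
  map_mul' X Y := by
    have h : (S * X * S) * (S * Y * S) = S * X * (S * S) * (Y * S) := by noncomm_ring
    rw [h, hS, mul_one]; noncomm_ring
  map_zero' := by simp
  map_add' X Y := by noncomm_ring
  commutes' r := by
    rw [mul_assoc, Algebra.commutes r S, ← mul_assoc, hS, one_mul]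
  map_star' X := by simp [star_mul, hSs, mul_assoc]

set_option maxHeartbeats 2000000 in
/-- A normalized geodesic `δ(t) = e^{tz} p e^{-tz}` of the projections
of the Calkin algebra lifts to a normalized geodesic `Δ(t) = e^{tZ} P e^{-tZ}` of the
projections of `B(H)`, where `P` may be chosen to be any projection lifting `p`. -/
theorem calkin_geodesic_lifts {H : Type*} [NormedAddCommGroup H]
    [InnerProductSpace ℂ H] [CompleteSpace H] [TopologicalSpace.SeparableSpace H]
    (hinf : ¬ FiniteDimensional ℂ H)
    {C : Type*} [CStarAlgebra C]
    (π : (H →L[ℂ] H) →⋆ₐ[ℂ] C) (hsurj : Function.Surjective π)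
    (hker : ∀ X : H →L[ℂ] H, π X = 0 ↔ IsCompactOperator ⇑X)
    (hnorm : ∀ X : H →L[ℂ] H,
      ‖π X‖ = sInf {r : ℝ | ∃ K : H →L[ℂ] H, IsCompactOperator ⇑K ∧ r = ‖X + K‖})
    (p z : C) (hp : IsSelfAdjoint p) (hp2 : p * p = p)
    (hz : star z = -z) (hzp : p * z * p = 0) (hzp' : (1 - p) * z * (1 - p) = 0)
    (hznorm : ‖z‖ ≤ Real.pi / 2)
    (P : H →L[ℂ] H) (hP : IsSelfAdjoint P) (hP2 : P * P = P) (hPp : π P = p) :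
    ∃ Z : H →L[ℂ] H, star Z = -Z ∧ P * Z * P = 0 ∧ (1 - P) * Z * (1 - P) = 0 ∧
      ‖Z‖ = ‖z‖ ∧ π Z = z ∧
      ∀ t : ℝ, π (exp (t • Z) * P * exp (-(t • Z))) =
        exp (t • z) * p * exp (-(t • z)) := by
  -- continuity of π
  have hπcont : Continuous π :=
    AddMonoidHomClass.continuous_of_bound π 1 fun x => by
      simpa using NonUnitalStarAlgHom.norm_apply_le π x
  -- an anti-selfadjoint lift of z
  obtain ⟨W, hW⟩ := hsurj z
  set Y : H →L[ℂ] H := (2:ℂ)⁻¹ • (W - star W) with hYdef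
  have hYstar : star Y = -Y := by
    simp [hYdef, star_smul, smul_sub, sub_eq_neg_add, neg_smul]
  have hπY : π Y = z := by
    rw [hYdef, map_smul, map_sub, map_star, hW, hz, sub_neg_eq_add, ← two_smul ℂ z,
      smul_smul]
    norm_num
  -- the off-diagonal compression
  set Q : H →L[ℂ] H := 1 - P with hQdef
  set Z₀ : H →L[ℂ] H := P * Y * Q + Q * Y * P with hZ₀def
  have hQstar : star Q = Q := by simp [hQdef, hP.star_eq]
  have hZ₀star : star Z₀ = -Z₀ := by
    simp only [hZ₀def, star_add, star_mul, hP.star_eq, hQstar, hYstar]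
    noncomm_ring
  have hπZ₀ : π Z₀ = z := by
    have hπQ : π Q = 1 - p := by rw [hQdef, map_sub, map_one, hPp]
    have e1 : p * z * (1 - p) = p * z - p * z * p := by noncomm_ring
    have e2 : (1 - p) * z * p = z * p - p * z * p := by noncomm_ring
    have e3 : (1 - p) * z * (1 - p) = z - z * p - p * z + p * z * p := by noncomm_ring
    rw [hzp] at e1 e2
    rw [hzp, add_zero] at e3
    have h4 : z - z * p - p * z = 0 := by rw [← e3, hzp']
    rw [sub_sub, sub_eq_zero] at h4
    rw [hZ₀def, map_add, map_mul, map_mul, map_mul, map_mul, hπY, hPp, hπQ, e1, e2,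
      sub_zero, sub_zero]
    calc p * z + z * p = z * p + p * z := by abel
    _ = z := h4.symm
  -- the symmetry S = 2P - 1
  set S : H →L[ℂ] H := P + P - 1 with hSdef
  have hSP : S * P = P := by rw [hSdef, sub_mul, add_mul, hP2, one_mul]; abel
  have hPS : P * S = P := by rw [hSdef, mul_sub, mul_add, hP2, mul_one]; abel
  have hSQ : S * Q = -Q := by
    rw [hQdef, mul_sub, mul_one, hSP, hSdef]; abel
  have hQS : Q * S = -Q := by
    rw [hQdef, sub_mul, one_mul, hPS, hSdef]; abel
  have hS2 : S * S = 1 := by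
    rw [show S * S = S * (P + P - 1) from by rw [← hSdef], mul_sub, mul_add, hSP, mul_one,
      hSdef]
    abel
  have hSs : star S = S := by simp [hSdef, hP.star_eq]
  -- S anticommutes with Z₀
  have hSZ₀ : S * Z₀ * S = -Z₀ := by
    have t0 : S * Z₀ * S = S * (P * Y * Q) * S + S * (Q * Y * P) * S := by
      rw [hZ₀def]; noncomm_ring
    have t1 : S * (P * Y * Q) * S = (S * P) * Y * (Q * S) := by noncomm_ring
    have t2 : S * (Q * Y * P) * S = (S * Q) * Y * (P * S) := by noncomm_ring
    rw [t0, t1, t2, hSP, hQS, hSQ, hPS, hZ₀def]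
    noncomm_ring
  -- the selfadjoint element A = i Z₀ and its truncation
  set A : H →L[ℂ] H := Complex.I • Z₀ with hAdef
  have hA : IsSelfAdjoint A := by
    rw [IsSelfAdjoint, hAdef, star_smul, hZ₀star, Complex.star_def, Complex.conj_I,
      neg_smul, smul_neg, neg_neg]
  have hSA : S * A * S = -A := by
    rw [hAdef, mul_smul_comm, smul_mul_assoc, hSZ₀, smul_neg]
  set r : ℝ := ‖z‖ with hrdef
  have hr0 : 0 ≤ r := norm_nonneg z
  set f : ℝ → ℝ := fun t => max (-r) (min r t) with hfdef
  have hfc : Continuous f := continuous_const.max (continuous_const.min continuous_id)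
  have hfodd : ∀ t, f (-t) = - f t := by
    intro t
    simp only [hfdef, max_def, min_def]
    split_ifs <;> linarith
  have hfbound : ∀ t : ℝ, |f t| ≤ r := by
    intro t
    rw [abs_le]
    exact ⟨le_max_left _ _, max_le (by linarith) (min_le_left _ _)⟩
  have hfid : ∀ t : ℝ, |t| ≤ r → f t = t := by
    intro t ht
    rw [abs_le] at ht
    simp only [hfdef]
    rw [min_eq_right ht.2, max_eq_right ht.1]
  set B : H →L[ℂ] H := cfc f A with hBdef
  have hBsa : IsSelfAdjoint B := cfc_predicate f A
  -- S anticommutes with B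
  have hSB : S * B * S = -B := by
    have hc := StarAlgHom.map_cfc (conjStarAlgHom S hS2 hSs) f A
      (hf := hfc.continuousOn) (hφ := by
        show Continuous fun X : H →L[ℂ] H => S * X * S
        exact (continuous_const.mul continuous_id).mul continuous_const)
      (ha := hA) (hφa := by
        show IsSelfAdjoint (S * A * S)
        rw [hSA]; exact hA.neg)
    calc S * B * S = (conjStarAlgHom S hS2 hSs) B := rfl
      _ = cfc f ((conjStarAlgHom S hS2 hSs) A) := hc
      _ = cfc f (-A) := by rw [show (conjStarAlgHom S hS2 hSs) A = -A from hSA]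
      _ = cfc (f <| - ·) A := (cfc_comp_neg f A (hf := hfc.continuousOn) (ha := hA)).symm
      _ = cfc (fun x => -(f x)) A := by rw [funext hfodd]
      _ = -B := cfc_neg f A
  have hSBc : S * B = -(B * S) := by
    have h1 : S * B = (S * B * S) * S := by rw [mul_assoc, hS2, mul_one]
    rw [h1, hSB, neg_mul]
  -- B is off-diagonal
  have hPform : P = (2:ℂ)⁻¹ • (1 + S) := by
    rw [show (1 : H →L[ℂ] H) + S = (2:ℂ) • P from by rw [hSdef, two_smul]; abel, smul_smul]
    norm_num
  have hQform : Q = (2:ℂ)⁻¹ • (1 - S) := by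
    rw [show (1 : H →L[ℂ] H) - S = (2:ℂ) • Q from by rw [hSdef, hQdef, two_smul]; abel,
      smul_smul]
    norm_num
  have hPBP : P * B * P = 0 := by
    have expand : (1 + S) * B * (1 + S) = B + S * B + B * S + S * B * S := by noncomm_ring
    rw [hPform]
    rw [smul_mul_assoc, smul_mul_assoc, mul_smul_comm, expand, hSB, hSBc]
    rw [show B + -(B * S) + B * S + -B = 0 from by abel, smul_zero, smul_zero]
  have hQBQ : Q * B * Q = 0 := by
    have expand : (1 - S) * B * (1 - S) = B - S * B - B * S + S * B * S := by noncomm_ring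
    rw [hQform]
    rw [smul_mul_assoc, smul_mul_assoc, mul_smul_comm, expand, hSB, hSBc]
    rw [show B - -(B * S) - B * S + -B = 0 from by abel, smul_zero, smul_zero]
  -- C is nontrivial, since the identity is not compact
  have hntC : Nontrivial C := by
    refine ⟨1, 0, fun h01 => hinf ?_⟩
    have hc : IsCompactOperator ⇑(1 : H →L[ℂ] H) := (hker 1).mp (by rw [map_one, h01])
    obtain ⟨K, hK, hKn⟩ := hc
    have : LocallyCompactSpace H :=
      hK.locallyCompactSpace_of_mem_nhds_of_addGroup (x := 0) (by simpa using hKn)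
    exact FiniteDimensional.of_locallyCompactSpace ℂ
  -- image of B under π
  have hIz : IsSelfAdjoint (Complex.I • z) := by
    rw [IsSelfAdjoint, star_smul, hz, Complex.star_def, Complex.conj_I, neg_smul, smul_neg,
      neg_neg]
  have hπA : π A = Complex.I • z := by rw [hAdef, map_smul, hπZ₀]
  have hπB : π B = Complex.I • z := by
    have h := StarAlgHom.map_cfc π f A (hf := hfc.continuousOn) (hφ := hπcont)
      (ha := hA) (hφa := by rw [hπA]; exact hIz)
    rw [h, hπA, cfc_congr (g := id) (a := Complex.I • z) ?_, cfc_id ℝ (Complex.I • z) hIz]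
    intro x hx
    refine hfid x ?_
    have hb := spectrum.norm_le_norm_of_mem hx
    rw [norm_smul, Complex.norm_I, one_mul] at hb
    rwa [Real.norm_eq_abs] at hb
  have hπZ : π ((-Complex.I) • B) = z := by
    rw [map_smul, hπB, smul_smul, neg_mul, Complex.I_mul_I, neg_neg, one_smul]
  have hnormB : ‖B‖ ≤ r := by
    refine norm_cfc_le hr0 fun x _ => ?_
    rw [Real.norm_eq_abs]
    exact hfbound x
  -- the lift Z
  refine ⟨(-Complex.I) • B, ?_, ?_, ?_, ?_, hπZ, ?_⟩
  · rw [star_smul, hBsa.star_eq, Complex.star_def, map_neg, Complex.conj_I, neg_neg,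
      neg_smul, ← neg_smul]
    simp
  · rw [mul_smul_comm, smul_mul_assoc, hPBP, smul_zero]
  · rw [mul_smul_comm, smul_mul_assoc, hQBQ, smul_zero]
  · have h1 : ‖(-Complex.I) • B‖ = ‖B‖ := by
      rw [norm_smul, norm_neg, Complex.norm_I, one_mul]
    refine le_antisymm (by rw [h1]; exact hnormB) ?_
    calc ‖z‖ = ‖π ((-Complex.I) • B)‖ := by rw [hπZ]
    _ ≤ ‖(-Complex.I) • B‖ := NonUnitalStarAlgHom.norm_apply_le π _
  · intro t
    have hsmul : ∀ X : H →L[ℂ] H, π (t • X) = t • π X := fun X => by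
      rw [← smul_one_smul ℂ t X, map_smul, smul_one_smul]
    letI : NormedAlgebra ℚ (H →L[ℂ] H) := NormedAlgebra.restrictScalars ℚ ℂ _
    letI : NormedAlgebra ℚ C := NormedAlgebra.restrictScalars ℚ ℂ _
    rw [map_mul, map_mul, map_exp π hπcont, map_exp π hπcont, map_neg, hsmul, hπZ, hPp]
end

section
/- Let P, Q be orthogonal projections on a Hilbert space. Then the kernel of P + Q - 1 equals (R(P) ∩ N(Q)) ⊕ (N(P) ∩ R(Q)). In particular, if R(P) ∩ N(Q) = {0} and N(P) ∩ R(Q) = {0}, then P + Q - 1 is injective. -/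
/-- For orthogonal projections `P, Q` on a Hilbert space,
`N(P + Q - 1) = (R(P) ∩ N(Q)) ⊕ (N(P) ∩ R(Q))`; in particular, if both of these
intersections are trivial then `P + Q - 1` is injective. -/
theorem ker_sum_sub_one {H : Type*} [NormedAddCommGroup H]
    [InnerProductSpace ℂ H] [CompleteSpace H]
    (P Q : H →L[ℂ] H) (hP : IsSelfAdjoint P) (hP2 : P * P = P)
    (hQ : IsSelfAdjoint Q) (hQ2 : Q * Q = Q) :
    LinearMap.ker ((P + Q - 1 : H →L[ℂ] H) : H →ₗ[ℂ] H) =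
        (LinearMap.range (P : H →ₗ[ℂ] H) ⊓ LinearMap.ker (Q : H →ₗ[ℂ] H)) ⊔ (LinearMap.ker (P : H →ₗ[ℂ] H) ⊓ LinearMap.range (Q : H →ₗ[ℂ] H)) ∧
      (LinearMap.range (P : H →ₗ[ℂ] H) ⊓ LinearMap.ker (Q : H →ₗ[ℂ] H) = ⊥ → LinearMap.ker (P : H →ₗ[ℂ] H) ⊓ LinearMap.range (Q : H →ₗ[ℂ] H) = ⊥ →
        Function.Injective ⇑(P + Q - 1)) := by
  have hPP : ∀ y, P (P y) = P y := fun y => by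
    simpa [ContinuousLinearMap.mul_apply] using DFunLike.congr_fun hP2 y
  have hQQ : ∀ y, Q (Q y) = Q y := fun y => by
    simpa [ContinuousLinearMap.mul_apply] using DFunLike.congr_fun hQ2 y
  have key : LinearMap.ker ((P + Q - 1 : H →L[ℂ] H) : H →ₗ[ℂ] H) =
      (LinearMap.range (P : H →ₗ[ℂ] H) ⊓ LinearMap.ker (Q : H →ₗ[ℂ] H)) ⊔ (LinearMap.ker (P : H →ₗ[ℂ] H) ⊓ LinearMap.range (Q : H →ₗ[ℂ] H)) := by
    apply le_antisymm
    · intro x hx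
      have hx' : P x + Q x = x := by
        have h := hx
        simp only [LinearMap.mem_ker, ContinuousLinearMap.coe_coe, ContinuousLinearMap.coe_sub',
          ContinuousLinearMap.coe_add', Pi.sub_apply, Pi.add_apply,
          ContinuousLinearMap.one_apply, sub_eq_zero] at h
        exact h
      have hPQ : P (Q x) = 0 := by
        have h := congrArg (fun y => P y) hx'
        simp only [map_add, hPP] at h
        -- h : P x + P (Q x) = P x
        have := add_left_cancel (a := P x) (by simpa using h)
        simpa using this
      have hQP : Q (P x) = 0 := by
        have h := congrArg (fun y => Q y) hx'
        simp only [map_add, hQQ] at h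
        -- h : Q (P x) + Q x = Q x
        exact by simpa using add_right_cancel (b := Q x) (by simpa using h : Q (P x) + Q x = 0 + Q x)
      have hu : P x ∈ LinearMap.range (P : H →ₗ[ℂ] H) ⊓ LinearMap.ker (Q : H →ₗ[ℂ] H) :=
        ⟨⟨x, rfl⟩, hQP⟩
      have hv : Q x ∈ LinearMap.ker (P : H →ₗ[ℂ] H) ⊓ LinearMap.range (Q : H →ₗ[ℂ] H) :=
        ⟨hPQ, ⟨x, rfl⟩⟩
      have : P x + Q x ∈ (LinearMap.range (P : H →ₗ[ℂ] H) ⊓ LinearMap.ker (Q : H →ₗ[ℂ] H)) ⊔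
          (LinearMap.ker (P : H →ₗ[ℂ] H) ⊓ LinearMap.range (Q : H →ₗ[ℂ] H)) :=
        Submodule.add_mem_sup hu hv
      rwa [hx'] at this
    · intro x hx
      rcases Submodule.mem_sup.mp hx with ⟨u, hu, v, hv, rfl⟩
      obtain ⟨⟨wu, hwu⟩, hQu⟩ := hu
      obtain ⟨hPv, ⟨wv, hwv⟩⟩ := hv
      have hPu : P u = u := by rw [← hwu, ContinuousLinearMap.coe_coe, hPP]
      have hQv : Q v = v := by rw [← hwv, ContinuousLinearMap.coe_coe, hQQ]
      have hQu' : Q u = 0 := hQu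
      have hPv' : P v = 0 := hPv
      simp only [LinearMap.mem_ker, ContinuousLinearMap.coe_coe, ContinuousLinearMap.coe_sub',
        ContinuousLinearMap.coe_add', Pi.sub_apply, Pi.add_apply,
        ContinuousLinearMap.one_apply, map_add, hPu, hQv, hPv', hQu']
      abel
  refine ⟨key, fun h1 h2 => ?_⟩
  have : LinearMap.ker ((P + Q - 1 : H →L[ℂ] H) : H →ₗ[ℂ] H) = ⊥ := by rw [key, h1, h2, sup_bot_eq]
  exact LinearMap.ker_eq_bot.mp this
end
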